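/- Let A be a weighted directed graph on n vertices that is weakly connected and hierarchically decomposable, with pairwise distinct minimal source subgraphs S₁, …, S_l. For each m let l_m = ∑ i ∈ S_m, ∑ j ∈ S_m, A i j be the total weight of edges inside S_m, and let m₀ = W − ∑ m, l_m be the total weight of the remaining edges, where W = ∑ i, ∑ j, A i j. For each m with l_m > 0 let η_f(S_m) denote the forward democracy coefficient of the induced subgraph, i.e. of the submatrix of A obtained by restricting rows and columns to S_m. Then η_f(A) = (∑ over those m with l_m > 0 of η_f(S_m) * l_m) / (m₀ + ∑ m, l_m). -/

import Mathlib

open Matrix BigOperators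

noncomputable section

variable {V : Type} [Fintype V] [DecidableEq V]

/-- Weighted in-degree vector. -/
def indeg (A : Matrix V V ℝ) (j : V) : ℝ := ∑ i, A i j

/-- Weighted in-degree Laplacian `L = diag d - A`. -/
def inLap (A : Matrix V V ℝ) : Matrix V V ℝ := Matrix.diagonal (indeg A) - A

/-- Weak connectivity. -/
def WeaklyConnected (A : Matrix V V ℝ) : Prop :=
  ∀ i j : V, Relation.ReflTransGen (fun i j => 0 < A i j ∨ 0 < A j i) i j

/-- A set of vertices with no incoming edges from outside. -/
def InClosed (A : Matrix V V ℝ) (S : Finset V) : Prop :=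
  ∀ i j : V, i ∉ S → j ∈ S → A i j = 0

/-- Minimal source subgraph. -/
def MinSourceSubgraph (A : Matrix V V ℝ) (S : Finset V) : Prop :=
  S.Nonempty ∧ InClosed A S ∧ ∀ T ⊆ S, T.Nonempty → T ≠ S → ¬ InClosed A T

/-- Total edge weight. -/
def totalWeight (A : Matrix V V ℝ) : ℝ := ∑ i, ∑ j, A i j

/-- `g` is a forward hierarchical level vector: a minimizer of `‖Lᵀ x - d‖₂`. -/
def IsFHL (A : Matrix V V ℝ) (g : V → ℝ) : Prop :=
  ∀ x : V → ℝ,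
    ∑ i, ((inLap A)ᵀ.mulVec g i - indeg A i) ^ 2 ≤
      ∑ i, ((inLap A)ᵀ.mulVec x i - indeg A i) ^ 2

/-- Forward democracy coefficient, computed from a forward hierarchical level vector `g`. -/
def etaF (A : Matrix V V ℝ) (g : V → ℝ) : ℝ :=
  1 - (∑ i, ∑ j, A i j * (g j - g i)) / totalWeight A

/-- The induced subgraph: the submatrix of `A` with rows and columns restricted to `S`. -/
def submatrixOn (A : Matrix V V ℝ) (S : Finset V) : Matrix {i // i ∈ S} {i // i ∈ S} ℝ :=
  fun i j => A i.val j.val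

set_option linter.unusedSectionVars false
set_option maxHeartbeats 1000000



lemma quad_nonneg_imp {b c : ℝ} (hb : 0 ≤ b) (h : ∀ t : ℝ, 0 ≤ 2*t*c + t^2*b) : c = 0 := by
  have h1 := h (-c/(b+1))
  have hb1 : (0:ℝ) < b + 1 := by linarith
  have h2 : 2*(-c/(b+1))*c + (-c/(b+1))^2*b =
      (-2*c^2*(b+1) + c^2*b) / (b+1)^2 := by
    field_simp
  rw [h2] at h1
  have h3 : 0 ≤ -2*c^2*(b+1) + c^2*b := by
    have hp : (0:ℝ) < (b+1)^2 := by positivity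
    by_contra hneg; push_neg at hneg
    have := div_neg_of_neg_of_pos hneg hp
    linarith
  nlinarith [sq_nonneg c]

lemma normal_eq {M : Matrix V V ℝ} {d g : V → ℝ}
    (h : ∀ x, ∑ i, (M.mulVec g i - d i)^2 ≤ ∑ i, (M.mulVec x i - d i)^2) :
    ∀ w, ∑ i, M.mulVec w i * (M.mulVec g i - d i) = 0 := by
  intro w
  apply quad_nonneg_imp (b := ∑ i, (M.mulVec w i)^2)
  · exact Finset.sum_nonneg fun i _ => sq_nonneg _
  · intro t
    have h1 := h (g + t • w)
    have h2 : ∀ i, M.mulVec (g + t • w) i = M.mulVec g i + t * M.mulVec w i := by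
      intro i
      rw [Matrix.mulVec_add, Matrix.mulVec_smul]
      simp
  -- expand
    have h3 : ∑ i, (M.mulVec (g + t • w) i - d i)^2
        = ∑ i, (M.mulVec g i - d i)^2
          + (2*t*(∑ i, M.mulVec w i * (M.mulVec g i - d i)) + t^2*(∑ i, (M.mulVec w i)^2)) := by
      rw [Finset.mul_sum, Finset.mul_sum, ← Finset.sum_add_distrib, ← Finset.sum_add_distrib]
      apply Finset.sum_congr rfl
      intro i _
      rw [h2 i]
      ring
    rw [h3] at h1
    linarith

lemma residual_unique {M : Matrix V V ℝ} {d g ρ x₀ : V → ℝ}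
    (hg : ∀ x, ∑ i, (M.mulVec g i - d i)^2 ≤ ∑ i, (M.mulVec x i - d i)^2)
    (hx : M.mulVec x₀ = fun i => d i - ρ i)
    (hρ : ∀ w, ∑ i, M.mulVec w i * ρ i = 0) :
    ∀ i, d i - M.mulVec g i = ρ i := by
  have hne := normal_eq hg
  have key : ∑ i, ((d i - M.mulVec g i) - ρ i)^2 = 0 := by
    have hu : ∀ i, (d i - M.mulVec g i) - ρ i = M.mulVec (x₀ - g) i := by
      intro i
      have : M.mulVec (x₀ - g) i = M.mulVec x₀ i - M.mulVec g i := by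
        rw [Matrix.mulVec_sub]; simp
      rw [this, hx]; ring
    calc ∑ i, ((d i - M.mulVec g i) - ρ i)^2
        = ∑ i, M.mulVec (x₀ - g) i * ((d i - M.mulVec g i) - ρ i) := by
          apply Finset.sum_congr rfl; intro i _; rw [← hu i]; ring
      _ = (- ∑ i, M.mulVec (x₀ - g) i * (M.mulVec g i - d i))
          - ∑ i, M.mulVec (x₀ - g) i * ρ i := by
          rw [← Finset.sum_neg_distrib, ← Finset.sum_sub_distrib]
          apply Finset.sum_congr rfl; intro i _; ring
      _ = 0 := by rw [hne, hρ]; ring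
  intro i
  have h0 : ∀ j ∈ Finset.univ, (0:ℝ) ≤ ((d j - M.mulVec g j) - ρ j)^2 :=
    fun j _ => sq_nonneg _
  have := (Finset.sum_eq_zero_iff_of_nonneg h0).mp key i (Finset.mem_univ i)
  have := pow_eq_zero_iff (n := 2) (by norm_num) |>.mp this
  linarith

lemma exists_mulVec_eq {M : Matrix V V ℝ} (h : ∀ z, M.mulVec z = 0 → z = 0) (c : V → ℝ) :
    ∃ z, M.mulVec z = c := by
  have hinj : Function.Injective M.mulVecLin := by
    rw [← LinearMap.ker_eq_bot, LinearMap.ker_eq_bot']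
    intro z hz
    exact h z hz
  exact (LinearMap.injective_iff_surjective.mp hinj) c

lemma inClosed_inter {A : Matrix V V ℝ} {S T : Finset V}
    (hS : InClosed A S) (hT : InClosed A T) : InClosed A (S ∩ T) := by
  intro i j hi hj
  rcases Finset.mem_inter.mp hj with ⟨hjS, hjT⟩
  by_cases h : i ∈ S
  · exact hT i j (fun hiT => hi (Finset.mem_inter.mpr ⟨h, hiT⟩)) hjT
  · exact hS i j h hjS

lemma minSource_disjoint {A : Matrix V V ℝ} {S T : Finset V}
    (hS : MinSourceSubgraph A S) (hT : MinSourceSubgraph A T) (hne : S ≠ T) :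
    ∀ i, i ∈ S → i ∈ T → False := by
  intro i hiS hiT
  have hint : (S ∩ T).Nonempty := ⟨i, Finset.mem_inter.mpr ⟨hiS, hiT⟩⟩
  have hic := inClosed_inter hS.2.1 hT.2.1
  have h1 : S ∩ T = S := by
    by_contra hx
    exact hS.2.2 (S ∩ T) Finset.inter_subset_left hint hx hic
  have h2 : S ∩ T = T := by
    by_contra hx
    exact hT.2.2 (S ∩ T) Finset.inter_subset_right hint hx hic
  exact hne (h1 ▸ h2)

lemma exists_minSource_subset {A : Matrix V V ℝ} :
    ∀ (T : Finset V), InClosed A T → T.Nonempty → ∃ T' ⊆ T, MinSourceSubgraph A T' := by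
  intro T
  induction T using Finset.strongInductionOn with
  | _ T ih =>
    intro hT hTne
    by_cases h : ∀ T'' ⊆ T, T''.Nonempty → T'' ≠ T → ¬ InClosed A T''
    · exact ⟨T, subset_rfl, hTne, hT, h⟩
    · push_neg at h
      obtain ⟨T'', hsub, hne, hneq, hic⟩ := h
      have hss : T'' ⊂ T := lt_of_le_of_ne hsub hneq
      obtain ⟨T', hT'sub, hT'⟩ := ih T'' hss hic hne
      exact ⟨T', hT'sub.trans hsub, hT'⟩

def extend (s : Finset V) (v : {i // i ∈ s} → ℝ) : V → ℝ :=
  fun i => if h : i ∈ s then v ⟨i, h⟩ else 0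

lemma extend_mem {s : Finset V} (v : {i // i ∈ s} → ℝ) (j : {i // i ∈ s}) :
    extend s v j = v j := by
  simp [extend, j.2]

lemma extend_not_mem {s : Finset V} (v : {i // i ∈ s} → ℝ) {j : V} (hj : j ∉ s) :
    extend s v j = 0 := by
  simp [extend, hj]

lemma sum_mul_extend (s : Finset V) (v : {i // i ∈ s} → ℝ) (f : V → ℝ) :
    ∑ j, f j * extend s v j = ∑ j : {i // i ∈ s}, f ↑j * v j := by
  have h1 : ∑ j, f j * extend s v j = ∑ j ∈ s, f j * extend s v j := by
    symm
    apply Finset.sum_subset (Finset.subset_univ s)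
    intro j _ hj
    rw [extend_not_mem v hj, mul_zero]
  have h2 : ∑ j : {i // i ∈ s}, f ↑j * v j = ∑ j : {i // i ∈ s}, f ↑j * extend s v ↑j := by
    apply Finset.sum_congr rfl
    intro j _
    rw [extend_mem]
  rw [h1, h2, Finset.sum_coe_sort s (fun j => f j * extend s v j)]

lemma sum_extend (s : Finset V) (v : {i // i ∈ s} → ℝ) :
    ∑ j, extend s v j = ∑ j : {i // i ∈ s}, v j := by
  have := sum_mul_extend s v (fun _ => 1)
  simpa using this

lemma mulVec_transpose_inLap (A : Matrix V V ℝ) (x : V → ℝ) (j : V) :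
    (inLap A)ᵀ.mulVec x j = indeg A j * x j - ∑ i, A i j * x i := by
  simp only [Matrix.mulVec, dotProduct, Matrix.transpose_apply, inLap,
    Matrix.sub_apply, Matrix.diagonal_apply, sub_mul, Finset.sum_sub_distrib]
  congr 1
  simp only [ite_mul, zero_mul]
  rw [Finset.sum_ite_eq' Finset.univ j (fun i => indeg A i * x i)]
  simp

lemma mulVec_inLap (A : Matrix V V ℝ) (w : V → ℝ) (i : V) :
    (inLap A).mulVec w i = indeg A i * w i - ∑ j, A i j * w j := by
  simp only [Matrix.mulVec, dotProduct, inLap,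
    Matrix.sub_apply, Matrix.diagonal_apply, sub_mul, Finset.sum_sub_distrib]
  congr 1
  have : ∀ j, (if i = j then indeg A i else 0) * w j = if i = j then indeg A i * w j else 0 := by
    intro j; split <;> simp
  rw [Finset.sum_congr rfl (fun j _ => this j),
    Finset.sum_ite_eq Finset.univ i (fun j => indeg A i * w j)]
  simp

lemma dot_mulVec_transpose (B : Matrix V V ℝ) (w ρ : V → ℝ) :
    ∑ i, Bᵀ.mulVec w i * ρ i = ∑ i, w i * B.mulVec ρ i := by
  have : ∀ i, Bᵀ.mulVec w i * ρ i = ∑ j, w j * (B j i * ρ i) := by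
    intro i
    rw [Matrix.mulVec, dotProduct, Finset.sum_mul]
    apply Finset.sum_congr rfl
    intro j _
    rw [Matrix.transpose_apply]; ring
  rw [Finset.sum_congr rfl (fun i _ => this i), Finset.sum_comm]
  apply Finset.sum_congr rfl
  intro j _
  rw [Matrix.mulVec, dotProduct, Finset.mul_sum]

lemma support_zero_of_invariant {A : Matrix V V ℝ} (hA : ∀ i j, 0 ≤ A i j)
    {l : ℕ} {S : Fin l → Finset V}
    (hall : ∀ T : Finset V, MinSourceSubgraph A T ↔ ∃ m, T = S m)
    (z : V → ℝ)
    (hz0 : ∀ j, ¬(∀ m, j ∉ S m) → z j = 0)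
    (hzeq : ∀ j, (∀ m, j ∉ S m) →
      indeg A j * z j = ∑ i, (if (∀ m, i ∉ S m) then A i j * z i else 0)) :
    z = 0 := by
  classical
  by_contra hz
  have hex : ∃ j, z j ≠ 0 := by
    by_contra h; push_neg at h; exact hz (funext h)
  obtain ⟨j₁, hj₁⟩ := hex
  obtain ⟨j₀, -, hmax⟩ := Finset.exists_max_image Finset.univ (fun i => |z i|)
    ⟨j₁, Finset.mem_univ j₁⟩
  set c₀ := |z j₀| with hc₀def
  have hc₀ : 0 < c₀ := lt_of_lt_of_le (abs_pos.mpr hj₁) (hmax j₁ (Finset.mem_univ j₁))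
  set P : V → Prop := fun j => ∀ m, j ∉ S m with hPdef
  set K : Finset V := Finset.univ.filter (fun j => |z j| = c₀) with hKdef
  have hKmem : ∀ j, j ∈ K ↔ |z j| = c₀ := by
    intro j; simp [hKdef]
  have hKne : K.Nonempty := ⟨j₀, (hKmem j₀).mpr rfl⟩
  have hKP : ∀ j ∈ K, P j := by
    intro j hj
    by_contra hPj
    have h1 : z j = 0 := hz0 j hPj
    have h2 := (hKmem j).mp hj
    rw [h1, abs_zero] at h2
    linarith
  have hKclosed : InClosed A K := by
    intro i j hi hj
    have hPj := hKP j hj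
    have heq : indeg A j * z j = ∑ i, (if P i then A i j * z i else 0) := hzeq j hPj
    have hzj : |z j| = c₀ := (hKmem j).mp hj
    have hd : 0 ≤ indeg A j := Finset.sum_nonneg fun i _ => hA i j
    have e1 : c₀ * indeg A j = |indeg A j * z j| := by
      rw [abs_mul, abs_of_nonneg hd, hzj]; ring
    have e2 : |∑ i, (if P i then A i j * z i else 0)| ≤
        ∑ i, (if P i then A i j * |z i| else 0) := by
      refine le_trans (Finset.abs_sum_le_sum_abs _ _) (le_of_eq ?_)
      apply Finset.sum_congr rfl
      intro i _
      split
      · rw [abs_mul, abs_of_nonneg (hA i j)]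
      · exact abs_zero
    have e3 : ∑ i, (if P i then A i j * |z i| else 0) ≤
        ∑ i, (if P i then A i j * c₀ else 0) := by
      apply Finset.sum_le_sum
      intro i _
      split
      · exact mul_le_mul_of_nonneg_left (hmax i (Finset.mem_univ i)) (hA i j)
      · exact le_refl _
    have e4 : ∑ i, (if P i then A i j * c₀ else 0) ≤ ∑ i, A i j * c₀ := by
      apply Finset.sum_le_sum
      intro i _
      split
      · exact le_refl _
      · exact mul_nonneg (hA _ j) (le_of_lt hc₀)
    have e5 : ∑ i, A i j * c₀ = indeg A j * c₀ := by
      rw [← Finset.sum_mul]; rfl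
    have echain : c₀ * indeg A j ≤ ∑ i, (if P i then A i j * |z i| else 0) := by
      rw [e1, heq]; exact e2
    have eqA : ∑ i, (if P i then A i j * c₀ else 0) = ∑ i, A i j * c₀ := by
      have : indeg A j * c₀ = c₀ * indeg A j := by ring
      apply le_antisymm e4
      rw [e5, this]
      exact le_trans echain e3
    have eqB : ∑ i, (if P i then A i j * |z i| else 0) =
        ∑ i, (if P i then A i j * c₀ else 0) := by
      apply le_antisymm e3
      calc ∑ i, (if P i then A i j * c₀ else 0) = c₀ * indeg A j := by
            rw [eqA, e5]; ring
        _ ≤ _ := echain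
    by_cases hPi : P i
    · by_contra hAij
      have hpos : 0 < A i j := lt_of_le_of_ne (hA i j) (Ne.symm hAij)
      have hterm : ∀ k ∈ Finset.univ, (0:ℝ) ≤
          (if P k then A k j * c₀ else 0) - (if P k then A k j * |z k| else 0) := by
        intro k _
        split
        · have := mul_le_mul_of_nonneg_left (hmax k (Finset.mem_univ k)) (hA k j)
          linarith
        · simp
      have hsum0 : ∑ k, ((if P k then A k j * c₀ else 0) -
          (if P k then A k j * |z k| else 0)) = 0 := by
        rw [Finset.sum_sub_distrib, eqB, sub_self]
      have := (Finset.sum_eq_zero_iff_of_nonneg hterm).mp hsum0 i (Finset.mem_univ i)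
      rw [if_pos hPi, if_pos hPi] at this
      have hzi : |z i| = c₀ := by
        have h2 : A i j * c₀ = A i j * |z i| := by linarith
        have := mul_left_cancel₀ (ne_of_gt hpos) h2
        linarith
      exact hi ((hKmem i).mpr hzi)
    · have hterm : ∀ k ∈ Finset.univ, (0:ℝ) ≤
          A k j * c₀ - (if P k then A k j * c₀ else 0) := by
        intro k _
        split
        · simp
        · have : 0 ≤ A k j * c₀ := mul_nonneg (hA _ j) (le_of_lt hc₀)
          linarith
      have hsum0 : ∑ k, (A k j * c₀ - (if P k then A k j * c₀ else 0)) = 0 := by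
        rw [Finset.sum_sub_distrib, eqA, sub_self]
      have := (Finset.sum_eq_zero_iff_of_nonneg hterm).mp hsum0 i (Finset.mem_univ i)
      rw [if_neg hPi] at this
      have : A i j * c₀ = 0 := by linarith
      rcases mul_eq_zero.mp this with h | h
      · exact h
      · exact absurd h (ne_of_gt hc₀)
  obtain ⟨T, hTsub, hT⟩ := exists_minSource_subset K hKclosed hKne
  obtain ⟨m, rfl⟩ := (hall T).mp hT
  obtain ⟨x, hx⟩ := hT.1
  exact (hKP x (hTsub hx)) m hx

lemma sum_mulVec_transpose_inLap (A : Matrix V V ℝ) (x : V → ℝ) :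
    ∑ i, (inLap A)ᵀ.mulVec x i = ∑ i, ∑ j, A i j * (x j - x i) := by
  rw [Finset.sum_congr rfl (fun j _ => mulVec_transpose_inLap A x j),
    Finset.sum_sub_distrib]
  have h1 : ∑ j, indeg A j * x j = ∑ i, ∑ j, A i j * x j := by
    rw [Finset.sum_comm]
    apply Finset.sum_congr rfl
    intro j _
    rw [indeg, Finset.sum_mul]
  have h2 : (∑ j, ∑ i, A i j * x i) = ∑ i, ∑ j, A i j * x i := Finset.sum_comm
  rw [h1, h2, ← Finset.sum_sub_distrib]
  apply Finset.sum_congr rfl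
  intro i _
  rw [← Finset.sum_sub_distrib]
  apply Finset.sum_congr rfl
  intro j _
  ring

lemma mulVec_eq_zero_of_forall_dot {B : Matrix V V ℝ} {v : V → ℝ}
    (h : ∀ w : V → ℝ, ∑ i, w i * B.mulVec v i = 0) : B.mulVec v = 0 := by
  funext k
  have h2 := h (B.mulVec v)
  have h3 : ∀ i ∈ Finset.univ, 0 ≤ B.mulVec v i * B.mulVec v i :=
    fun i _ => mul_self_nonneg _
  have h4 := (Finset.sum_eq_zero_iff_of_nonneg h3).mp h2 k (Finset.mem_univ k)
  exact mul_self_eq_zero.mp h4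

theorem stmt_19 {n : ℕ} (hn : 0 < n) (A : Matrix (Fin n) (Fin n) ℝ)
    (hA : ∀ i j, 0 ≤ A i j) (hdiag : ∀ i, A i i = 0)
    (hwc : WeaklyConnected A) (hW : 0 < totalWeight A)
    (hdec : ∃ S : Finset (Fin n), MinSourceSubgraph A S ∧ S ≠ Finset.univ)
    (l : ℕ) (S : Fin l → Finset (Fin n)) (hinj : Function.Injective S)
    (hall : ∀ T : Finset (Fin n), MinSourceSubgraph A T ↔ ∃ m, T = S m)
    (g : Fin n → ℝ) (hg : IsFHL A g)
    (gS : (m : Fin l) → {i // i ∈ S m} → ℝ)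
    (hgS : ∀ m : Fin l, IsFHL (submatrixOn A (S m)) (gS m)) :
    etaF A g =
      (∑ m ∈ Finset.univ.filter (fun m : Fin l => 0 < ∑ i ∈ S m, ∑ j ∈ S m, A i j),
          etaF (submatrixOn A (S m)) (gS m) * (∑ i ∈ S m, ∑ j ∈ S m, A i j)) /
        ((totalWeight A - ∑ m : Fin l, ∑ i ∈ S m, ∑ j ∈ S m, A i j) +
          ∑ m : Fin l, ∑ i ∈ S m, ∑ j ∈ S m, A i j) := by
  classical
  have hMSS : ∀ m, MinSourceSubgraph A (S m) := fun m => (hall _).mpr ⟨m, rfl⟩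
  have hIC : ∀ (m : Fin l) (i j : Fin n), i ∉ S m → j ∈ S m → A i j = 0 :=
    fun m => (hMSS m).2.1
  have hdisj : ∀ m m' : Fin l, m ≠ m' → ∀ i, i ∈ S m → i ∈ S m' → False := by
    intro m m' hmm i h1 h2
    exact minSource_disjoint (hMSS m) (hMSS m') (fun he => hmm (hinj he)) i h1 h2
  have hsubdeg : ∀ (m : Fin l) (j : {i // i ∈ S m}),
      indeg (submatrixOn A (S m)) j = indeg A ↑j := by
    intro m j
    have h1 : indeg (submatrixOn A (S m)) j = ∑ i ∈ S m, A i ↑j :=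
      Finset.sum_coe_sort (S m) (fun i => A i ↑j)
    rw [h1, indeg]
    exact Finset.sum_subset (Finset.subset_univ _) (fun i _ hi => hIC m i ↑j hi j.2)
  set r : (m : Fin l) → {i // i ∈ S m} → ℝ :=
    fun m i => indeg (submatrixOn A (S m)) i
      - (inLap (submatrixOn A (S m)))ᵀ.mulVec (gS m) i with hrdef
  have hLmr : ∀ m, (inLap (submatrixOn A (S m))).mulVec (r m) = 0 := by
    intro m
    have hgS' : ∀ x, ∑ i, ((inLap (submatrixOn A (S m)))ᵀ.mulVec (gS m) i
          - indeg (submatrixOn A (S m)) i) ^ 2 ≤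
        ∑ i, ((inLap (submatrixOn A (S m)))ᵀ.mulVec x i
          - indeg (submatrixOn A (S m)) i) ^ 2 := hgS m
    have hq : (inLap (submatrixOn A (S m))).mulVec
        (fun i => (inLap (submatrixOn A (S m)))ᵀ.mulVec (gS m) i
          - indeg (submatrixOn A (S m)) i) = 0 := by
      apply mulVec_eq_zero_of_forall_dot
      intro w
      rw [← dot_mulVec_transpose]
      exact normal_eq hgS' w
    have hrq : r m = -(fun i => (inLap (submatrixOn A (S m)))ᵀ.mulVec (gS m) i
          - indeg (submatrixOn A (S m)) i) := by
      funext i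
      simp [hrdef, neg_sub]
    rw [hrq, Matrix.mulVec_neg, hq, neg_zero]
  have hextker : ∀ m, (inLap A).mulVec (extend (S m) (r m)) = 0 := by
    intro m
    funext i
    rw [mulVec_inLap, sum_mul_extend (S m) (r m) (fun j => A i j)]
    by_cases hi : i ∈ S m
    · have h0 := congrFun (hLmr m) ⟨i, hi⟩
      rw [mulVec_inLap, hsubdeg m ⟨i, hi⟩] at h0
      have he : extend (S m) (r m) i = r m ⟨i, hi⟩ := by simp [extend, hi]
      rw [he]
      simp only [Pi.zero_apply] at h0
      exact h0
    · rw [extend_not_mem _ hi]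
      have hz : ∀ j : {x // x ∈ S m}, A i ↑j * r m j = 0 :=
        fun j => by rw [hIC m i ↑j hi j.2, zero_mul]
      rw [Finset.sum_congr rfl (fun j _ => hz j)]
      simp
  set ρ : Fin n → ℝ := fun i => ∑ m, extend (S m) (r m) i with hρdef
  have hρsum : ρ = ∑ m, extend (S m) (r m) := by
    funext i
    simp only [hρdef, Finset.sum_apply]
  have hLρ : (inLap A).mulVec ρ = 0 := by
    rw [hρsum, ← Matrix.mulVecLin_apply, map_sum]
    apply Finset.sum_eq_zero
    intro m _
    rw [Matrix.mulVecLin_apply, hextker m]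
  have hρorth : ∀ w, ∑ i, (inLap A)ᵀ.mulVec w i * ρ i = 0 := by
    intro w
    rw [dot_mulVec_transpose, hLρ]
    simp
  set y : Fin n → ℝ := fun i => ∑ m, extend (S m) (gS m) i with hydef
  set c : Fin n → ℝ := fun j => indeg A j - ρ j - (inLap A)ᵀ.mulVec y j with hcdef
  have hρS : ∀ (m : Fin l) (j : Fin n) (hj : j ∈ S m), ρ j = r m ⟨j, hj⟩ := by
    intro m j hj
    simp only [hρdef]
    rw [Finset.sum_eq_single m]
    · simp [extend, hj]
    · intro m' _ hm'
      apply extend_not_mem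
      intro hjm'
      exact hdisj m' m hm' j hjm' hj
    · intro h
      exact absurd (Finset.mem_univ m) h
  have hyS : ∀ (m : Fin l) (j : Fin n) (hj : j ∈ S m), y j = gS m ⟨j, hj⟩ := by
    intro m j hj
    simp only [hydef]
    rw [Finset.sum_eq_single m]
    · simp [extend, hj]
    · intro m' _ hm'
      apply extend_not_mem
      intro hjm'
      exact hdisj m' m hm' j hjm' hj
    · intro h
      exact absurd (Finset.mem_univ m) h
  have hMyS : ∀ (m : Fin l) (j : Fin n) (hj : j ∈ S m), (inLap A)ᵀ.mulVec y j
      = (inLap (submatrixOn A (S m)))ᵀ.mulVec (gS m) ⟨j, hj⟩ := by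
    intro m j hj
    rw [mulVec_transpose_inLap, mulVec_transpose_inLap]
    have h2 : ∑ i, A i j * y i = ∑ i : {x // x ∈ S m}, A ↑i j * gS m i := by
      calc ∑ i, A i j * y i = ∑ i, ∑ m', A i j * extend (S m') (gS m') i := by
            apply Finset.sum_congr rfl
            intro i _
            simp only [hydef]
            rw [Finset.mul_sum]
        _ = ∑ m', ∑ i, A i j * extend (S m') (gS m') i := Finset.sum_comm
        _ = ∑ m', ∑ i : {x // x ∈ S m'}, A ↑i j * gS m' i := by
            apply Finset.sum_congr rfl
            intro m' _
            exact sum_mul_extend _ _ _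
        _ = ∑ i : {x // x ∈ S m}, A ↑i j * gS m i := by
            rw [Finset.sum_eq_single m]
            · intro m' _ hm'
              apply Finset.sum_eq_zero
              intro i _
              have hins : ↑i ∉ S m := fun h => hdisj m' m hm' ↑i i.2 h
              rw [hIC m ↑i j hins hj, zero_mul]
            · intro h
              exact absurd (Finset.mem_univ m) h
    rw [hyS m j hj, h2, hsubdeg m ⟨j, hj⟩]
    rfl
  have hcS : ∀ (j : Fin n), ¬(∀ m, j ∉ S m) → c j = 0 := by
    intro j hj
    push_neg at hj
    obtain ⟨m, hjm⟩ := hj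
    simp only [hcdef]
    rw [hρS m j hjm, hMyS m j hjm]
    simp only [hrdef]
    rw [hsubdeg m ⟨j, hjm⟩]
    ring
  set M' : Matrix (Fin n) (Fin n) ℝ := fun j i =>
    if (∀ m, j ∉ S m) then (if (∀ m, i ∉ S m) then (inLap A)ᵀ j i else 0)
    else (if j = i then 1 else 0) with hM'def
  have hM'apply : ∀ (z : Fin n → ℝ) (j : Fin n), M'.mulVec z j = ∑ i, M' j i * z i :=
    fun z j => rfl
  have hM'notP : ∀ (j : Fin n), ¬(∀ m, j ∉ S m) → ∀ z, M'.mulVec z j = z j := by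
    intro j hj z
    rw [hM'apply]
    simp only [hM'def, if_neg hj, ite_mul, one_mul, zero_mul]
    rw [Finset.sum_ite_eq Finset.univ j z]
    simp
  have hM'P : ∀ (j : Fin n), (∀ m, j ∉ S m) → ∀ z, M'.mulVec z j
      = indeg A j * z j - ∑ i, (if (∀ m, i ∉ S m) then A i j * z i else 0) := by
    intro j hj z
    rw [hM'apply]
    simp only [hM'def, if_pos hj]
    have h1 : ∀ i, (if (∀ m, i ∉ S m) then (inLap A)ᵀ j i else 0) * z i
        = (if i = j then (if (∀ m, i ∉ S m) then indeg A i * z i else 0) else 0)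
          - (if (∀ m, i ∉ S m) then A i j * z i else 0) := by
      intro i
      rw [Matrix.transpose_apply, inLap, Matrix.sub_apply, Matrix.diagonal_apply]
      by_cases hPi : (∀ m, i ∉ S m) <;> by_cases hij : i = j <;>
        simp [hPi, hij, hj] <;> ring
    rw [Finset.sum_congr rfl (fun i _ => h1 i), Finset.sum_sub_distrib,
      Finset.sum_ite_eq' Finset.univ j
        (fun i => (if (∀ m, i ∉ S m) then indeg A i * z i else 0))]
    simp [if_pos hj]
  have hM'inj : ∀ z, M'.mulVec z = 0 → z = 0 := by
    intro z hz
    apply support_zero_of_invariant hA hall z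
    · intro j hj
      have h0 := congrFun hz j
      simp only [Pi.zero_apply] at h0
      rw [hM'notP j hj z] at h0
      exact h0
    · intro j hj
      have h0 := congrFun hz j
      simp only [Pi.zero_apply] at h0
      rw [hM'P j hj z] at h0
      linarith
  obtain ⟨z', hz'⟩ := exists_mulVec_eq hM'inj c
  have hz'0 : ∀ j, ¬(∀ m, j ∉ S m) → z' j = 0 := by
    intro j hj
    have h0 := congrFun hz' j
    rw [hM'notP j hj z'] at h0
    rw [h0]
    exact hcS j hj
  have hMz' : (inLap A)ᵀ.mulVec z' = c := by
    funext j
    rw [mulVec_transpose_inLap]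
    by_cases hj : (∀ m, j ∉ S m)
    · have h1 : ∑ i, A i j * z' i = ∑ i, (if (∀ m, i ∉ S m) then A i j * z' i else 0) := by
        apply Finset.sum_congr rfl
        intro i _
        by_cases hPi : (∀ m, i ∉ S m)
        · rw [if_pos hPi]
        · rw [if_neg hPi, hz'0 i hPi, mul_zero]
      rw [h1, ← hM'P j hj z', hz']
    · push_neg at hj
      obtain ⟨m, hjm⟩ := hj
      have hPj : ¬(∀ m, j ∉ S m) := by
        push_neg
        exact ⟨m, hjm⟩
      rw [hz'0 j hPj, mul_zero]
      have h2 : ∑ i, A i j * z' i = 0 := by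
        apply Finset.sum_eq_zero
        intro i _
        by_cases hPi : (∀ m', i ∉ S m')
        · rw [hIC m i j (hPi m) hjm, zero_mul]
        · rw [hz'0 i hPi, mul_zero]
      rw [h2, hcS j hPj]
      simp
  have hMx₀ : (inLap A)ᵀ.mulVec (y + z') = fun i => indeg A i - ρ i := by
    rw [Matrix.mulVec_add, hMz']
    funext i
    simp only [Pi.add_apply, hcdef]
    ring
  have hg' : ∀ x, ∑ i, ((inLap A)ᵀ.mulVec g i - indeg A i) ^ 2 ≤
      ∑ i, ((inLap A)ᵀ.mulVec x i - indeg A i) ^ 2 := hg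
  have hres : ∀ i, indeg A i - (inLap A)ᵀ.mulVec g i = ρ i :=
    residual_unique hg' hMx₀ hρorth
  have hWd : totalWeight A = ∑ j, indeg A j := by
    rw [totalWeight]
    simp only [indeg]
    exact Finset.sum_comm
  have hnum : ∑ i, ∑ j, A i j * (g j - g i) = totalWeight A - ∑ i, ρ i := by
    rw [← sum_mulVec_transpose_inLap]
    have hh : ∀ i, (inLap A)ᵀ.mulVec g i = indeg A i - ρ i := by
      intro i
      have := hres i
      linarith
    rw [Finset.sum_congr rfl (fun i _ => hh i), Finset.sum_sub_distrib, hWd]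
  have hρtot : ∑ i, ρ i = ∑ m, ∑ i : {x // x ∈ S m}, r m i := by
    simp only [hρdef]
    rw [Finset.sum_comm]
    apply Finset.sum_congr rfl
    intro m _
    exact sum_extend _ _
  have hWm : ∀ m, totalWeight (submatrixOn A (S m)) = ∑ i ∈ S m, ∑ j ∈ S m, A i j := by
    intro m
    rw [totalWeight, ← Finset.sum_coe_sort (S m) (fun i => ∑ j ∈ S m, A i j)]
    apply Finset.sum_congr rfl
    intro i _
    exact Finset.sum_coe_sort (S m) (fun j => A ↑i j)
  have hsumr : ∀ m, ∑ i : {x // x ∈ S m}, r m i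
      = totalWeight (submatrixOn A (S m))
        - ∑ i : {x // x ∈ S m}, ∑ j : {x // x ∈ S m},
            submatrixOn A (S m) i j * (gS m j - gS m i) := by
    intro m
    simp only [hrdef]
    rw [Finset.sum_sub_distrib, ← sum_mulVec_transpose_inLap]
    congr 1
    rw [totalWeight]
    simp only [indeg]
    exact Finset.sum_comm
  have hfinal : ∑ m, ∑ i : {x // x ∈ S m}, r m i
      = ∑ m ∈ Finset.univ.filter (fun m : Fin l => 0 < ∑ i ∈ S m, ∑ j ∈ S m, A i j),
          etaF (submatrixOn A (S m)) (gS m) * (∑ i ∈ S m, ∑ j ∈ S m, A i j) := by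
    rw [← Finset.sum_filter_add_sum_filter_not Finset.univ
      (fun m : Fin l => 0 < ∑ i ∈ S m, ∑ j ∈ S m, A i j)
      (fun m => ∑ i : {x // x ∈ S m}, r m i)]
    have hzero : ∑ m ∈ Finset.univ.filter
        (fun m : Fin l => ¬ 0 < ∑ i ∈ S m, ∑ j ∈ S m, A i j),
        (∑ i : {x // x ∈ S m}, r m i) = 0 := by
      apply Finset.sum_eq_zero
      intro m hm
      rw [Finset.mem_filter] at hm
      have hge : 0 ≤ ∑ i ∈ S m, ∑ j ∈ S m, A i j :=
        Finset.sum_nonneg fun i _ => Finset.sum_nonneg fun j _ => hA i j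
      have heq0 : ∑ i ∈ S m, ∑ j ∈ S m, A i j = 0 :=
        le_antisymm (le_of_not_gt hm.2) hge
      have hAz : ∀ i ∈ S m, ∀ j ∈ S m, A i j = 0 := by
        intro i hi j hj
        have h1 := (Finset.sum_eq_zero_iff_of_nonneg
          (fun i _ => Finset.sum_nonneg fun j _ => hA i j)).mp heq0 i hi
        exact (Finset.sum_eq_zero_iff_of_nonneg (fun j _ => hA i j)).mp h1 j hj
      rw [hsumr m, hWm m, heq0]
      have hQ : ∑ i : {x // x ∈ S m}, ∑ j : {x // x ∈ S m},
          submatrixOn A (S m) i j * (gS m j - gS m i) = 0 := by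
        apply Finset.sum_eq_zero
        intro i _
        apply Finset.sum_eq_zero
        intro j _
        rw [show submatrixOn A (S m) i j = A ↑i ↑j from rfl, hAz ↑i i.2 ↑j j.2, zero_mul]
      rw [hQ]
      ring
    rw [hzero, add_zero]
    apply Finset.sum_congr rfl
    intro m hm
    rw [Finset.mem_filter] at hm
    have hne : (∑ i ∈ S m, ∑ j ∈ S m, A i j) ≠ 0 := ne_of_gt hm.2
    rw [hsumr m, hWm m]
    simp only [etaF, hWm m]
    field_simp
  have hW0 : totalWeight A ≠ 0 := ne_of_gt hW
  rw [etaF, hnum, hρtot, hfinal]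
  have hden : (totalWeight A - ∑ m : Fin l, ∑ i ∈ S m, ∑ j ∈ S m, A i j)
      + ∑ m : Fin l, ∑ i ∈ S m, ∑ j ∈ S m, A i j = totalWeight A := by ring
  rw [hden]
  field_simp
  ring
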